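/- Let L be the restricted Lie algebra over a field F of characteristic 2 with basis {x, y, z} and relations [x,y] = z, [x,z] = [y,z] = 0, x^{[2]} = y^{[2]} = 0, z^{[2]} = z. Then the restricted enveloping algebra u(L) is Lie center-by-metabelian but not Lie metabelian: [[[a,b],[c,d]], e] = 0 for all a,b,c,d,e ∈ u(L), yet there exist a,b,c,d ∈ u(L) with [[a,b],[c,d]] ≠ 0. -/

import Mathlib

open FreeAlgebra

/-- The defining relations of `u(L)` for the restricted Lie algebra `L` over a field `F`
of characteristic 2 with basis `{x, y, z}`, `[x,y] = z`, `[x,z] = [y,z] = 0`,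
`x^{[2]} = y^{[2]} = 0`, `z^{[2]} = z`. Here `x = ι 0`, `y = ι 1`, `z = ι 2`. -/
inductive uRel (F : Type*) [Field F] :
    FreeAlgebra F (Fin 3) → FreeAlgebra F (Fin 3) → Prop
  | commxy : uRel F (ι F (0 : Fin 3) * ι F (1 : Fin 3) - ι F (1 : Fin 3) * ι F (0 : Fin 3))
      (ι F (2 : Fin 3))
  | commxz : uRel F (ι F (0 : Fin 3) * ι F (2 : Fin 3) - ι F (2 : Fin 3) * ι F (0 : Fin 3)) 0
  | commyz : uRel F (ι F (1 : Fin 3) * ι F (2 : Fin 3) - ι F (2 : Fin 3) * ι F (1 : Fin 3)) 0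
  | xsq : uRel F (ι F (0 : Fin 3) * ι F (0 : Fin 3)) 0
  | ysq : uRel F (ι F (1 : Fin 3) * ι F (1 : Fin 3)) 0
  | zsq : uRel F (ι F (2 : Fin 3) * ι F (2 : Fin 3)) (ι F (2 : Fin 3))

/-- The restricted enveloping algebra `u(L)` of the above `L`. -/
def uL (F : Type*) [Field F] : Type _ := RingQuot (uRel F)

instance (F : Type*) [Field F] : Ring (uL F) := inferInstanceAs (Ring (RingQuot (uRel F)))

namespace uLAux
variable (F : Type*) [Field F]
instance : Algebra F (uL F) := inferInstanceAs (Algebra F (RingQuot (uRel F)))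

def X : uL F := RingQuot.mkAlgHom F (uRel F) (ι F (0 : Fin 3))
def Y : uL F := RingQuot.mkAlgHom F (uRel F) (ι F (1 : Fin 3))
def Z : uL F := RingQuot.mkAlgHom F (uRel F) (ι F (2 : Fin 3))

lemma rel_xy : X F * Y F - Y F * X F = Z F := by
  have h := RingQuot.mkAlgHom_rel F (uRel.commxy (F := F))
  simp only [map_sub, map_mul] at h
  exact h

lemma rel_xz : X F * Z F = Z F * X F := by
  have := RingQuot.mkAlgHom_rel F (uRel.commxz (F := F))
  simp only [map_sub, map_mul, map_zero, sub_eq_zero] at this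
  exact this

lemma rel_yz : Y F * Z F = Z F * Y F := by
  have := RingQuot.mkAlgHom_rel F (uRel.commyz (F := F))
  simp only [map_sub, map_mul, map_zero, sub_eq_zero] at this
  exact this

lemma xsq : X F * X F = 0 := by
  have h := RingQuot.mkAlgHom_rel F (uRel.xsq (F := F))
  simp only [map_mul, map_zero] at h
  exact h

lemma ysq : Y F * Y F = 0 := by
  have h := RingQuot.mkAlgHom_rel F (uRel.ysq (F := F))
  simp only [map_mul, map_zero] at h
  exact h

lemma zsq : Z F * Z F = Z F := by
  have h := RingQuot.mkAlgHom_rel F (uRel.zsq (F := F))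
  simp only [map_mul] at h
  exact h

lemma uL_induction {C : uL F → Prop}
    (halg : ∀ r : F, C (algebraMap F (uL F) r))
    (hX : C (X F)) (hY : C (Y F)) (hZ : C (Z F))
    (hadd : ∀ a b, C a → C b → C (a + b))
    (hmul : ∀ a b, C a → C b → C (a * b)) : ∀ u, C u := by
  intro u
  obtain ⟨v, rfl⟩ := RingQuot.mkAlgHom_surjective F (uRel F) u
  induction v using FreeAlgebra.induction with
  | grade0 r => rw [AlgHom.commutes]; exact halg r
  | grade1 i =>
      fin_cases i
      · exact hX
      · exact hY
      · exact hZ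
  | add a b ha hb => rw [map_add]; exact hadd _ _ ha hb
  | mul a b ha hb => rw [map_mul]; exact hmul _ _ ha hb

end uLAux

namespace uLAux
variable (F : Type*) [Field F]

lemma Z_comm : ∀ u : uL F, Z F * u = u * Z F := by
  apply uL_induction
  · intro r; rw [← Algebra.commutes]
  · exact (rel_xz F).symm
  · exact (rel_yz F).symm
  · rfl
  · intro a b ha hb; rw [mul_add, add_mul, ha, hb]
  · intro a b ha hb; rw [← mul_assoc, ha, mul_assoc, hb, mul_assoc]

variable [CharP F 2]

lemma neg_eq (u : uL F) : -u = u := by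
  have h2 : (2 : F) = 0 := by exact_mod_cast CharP.cast_eq_zero F 2
  have h : u + u = 0 := by
    calc u + u = (2 : F) • u := (two_smul F u).symm
    _ = 0 := by rw [h2, zero_smul]
  exact neg_eq_of_add_eq_zero_left h

/-- left-Leibniz closure helper -/
lemma comm_mul_right {g b1 b2 w1 w2 : uL F}
    (h1 : g * b1 - b1 * g = Z F * w1) (h2 : g * b2 - b2 * g = Z F * w2) :
    g * (b1 * b2) - (b1 * b2) * g = Z F * (w1 * b2 + b1 * w2) := by
  have e : g * (b1 * b2) - (b1 * b2) * g
      = (g * b1 - b1 * g) * b2 + b1 * (g * b2 - b2 * g) := by noncomm_ring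
  rw [e, h1, h2, mul_add, mul_assoc, ← mul_assoc b1, ← Z_comm, mul_assoc]

lemma comm_mul_left {a1 a2 b w1 w2 : uL F}
    (h1 : a1 * b - b * a1 = Z F * w1) (h2 : a2 * b - b * a2 = Z F * w2) :
    (a1 * a2) * b - b * (a1 * a2) = Z F * (a1 * w2 + w1 * a2) := by
  have e : (a1 * a2) * b - b * (a1 * a2)
      = a1 * (a2 * b - b * a2) + (a1 * b - b * a1) * a2 := by noncomm_ring
  rw [e, h1, h2, mul_add, ← mul_assoc a1, ← Z_comm, mul_assoc, mul_assoc]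

lemma comm_X : ∀ b : uL F, ∃ w, X F * b - b * X F = Z F * w := by
  apply uL_induction
  · intro r; exact ⟨0, by rw [← Algebra.commutes, sub_self, mul_zero]⟩
  · exact ⟨0, by rw [sub_self, mul_zero]⟩
  · exact ⟨1, by rw [rel_xy, mul_one]⟩
  · exact ⟨0, by rw [rel_xz, sub_self, mul_zero]⟩
  · rintro a b ⟨w1, h1⟩ ⟨w2, h2⟩
    exact ⟨w1 + w2, by rw [mul_add, add_mul, mul_add, ← h1, ← h2]; abel⟩
  · rintro a b ⟨w1, h1⟩ ⟨w2, h2⟩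
    exact ⟨w1 * b + a * w2, comm_mul_right F h1 h2⟩

lemma comm_Y : ∀ b : uL F, ∃ w, Y F * b - b * Y F = Z F * w := by
  apply uL_induction
  · intro r; exact ⟨0, by rw [← Algebra.commutes, sub_self, mul_zero]⟩
  · refine ⟨-1, ?_⟩
    rw [mul_neg_one, ← rel_xy]; abel
  · exact ⟨0, by rw [sub_self, mul_zero]⟩
  · exact ⟨0, by rw [rel_yz, sub_self, mul_zero]⟩
  · rintro a b ⟨w1, h1⟩ ⟨w2, h2⟩
    exact ⟨w1 + w2, by rw [mul_add, add_mul, mul_add, ← h1, ← h2]; abel⟩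
  · rintro a b ⟨w1, h1⟩ ⟨w2, h2⟩
    exact ⟨w1 * b + a * w2, comm_mul_right F h1 h2⟩

lemma comm_mem : ∀ a b : uL F, ∃ w, a * b - b * a = Z F * w := by
  apply uL_induction
  · intro r b; exact ⟨0, by rw [Algebra.commutes, sub_self, mul_zero]⟩
  · exact comm_X F
  · exact comm_Y F
  · intro b; exact ⟨0, by rw [Z_comm, sub_self, mul_zero]⟩
  · rintro a1 a2 h1 h2 b
    obtain ⟨w1, e1⟩ := h1 b
    obtain ⟨w2, e2⟩ := h2 b
    exact ⟨w1 + w2, by rw [add_mul, mul_add, mul_add, ← e1, ← e2]; abel⟩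
  · rintro a1 a2 h1 h2 b
    obtain ⟨w1, e1⟩ := h1 b
    obtain ⟨w2, e2⟩ := h2 b
    exact ⟨a1 * w2 + w1 * a2, comm_mul_left F e1 e2⟩

end uLAux

namespace uLAux
set_option linter.unusedSectionVars false
variable (F : Type*) [Field F] [CharP F 2]

/-- membership in span of {Z, XZ, YZ, XYZ} -/
def inV (u : uL F) : Prop :=
  ∃ α β γ δ : F, u = α • Z F + β • (X F * Z F) + γ • (Y F * Z F) + δ • (X F * (Y F * Z F))

lemma inV_add {u v : uL F} (hu : inV F u) (hv : inV F v) : inV F (u + v) := by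
  obtain ⟨a, b, c, d, rfl⟩ := hu
  obtain ⟨a', b', c', d', rfl⟩ := hv
  exact ⟨a + a', b + b', c + c', d + d', by simp only [add_smul]; abel⟩

lemma inV_smul {u : uL F} (r : F) (hu : inV F u) : inV F (r • u) := by
  obtain ⟨a, b, c, d, rfl⟩ := hu
  exact ⟨r * a, r * b, r * c, r * d, by simp only [smul_add, smul_smul]⟩

lemma yx_eq : Y F * X F = X F * Y F + Z F := by
  have h := rel_xy F
  have : Y F * X F = X F * Y F - Z F := by rw [← h]; abel
  rw [this, sub_eq_add_neg, neg_eq]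

lemma X_mulV {u : uL F} (hu : inV F u) : inV F (X F * u) := by
  obtain ⟨a, b, c, d, rfl⟩ := hu
  refine ⟨0, a, 0, c, ?_⟩
  simp only [mul_add, mul_smul_comm]
  rw [← mul_assoc (X F) (X F), xsq, zero_mul, ← mul_assoc (X F) (X F), xsq, zero_mul]
  simp

lemma Y_mulV {u : uL F} (hu : inV F u) : inV F (Y F * u) := by
  obtain ⟨a, b, c, d, rfl⟩ := hu
  refine ⟨b, 0, a + d, b, ?_⟩
  have hyxz : Y F * (X F * Z F) = X F * (Y F * Z F) + Z F := by
    rw [← mul_assoc, yx_eq, add_mul, mul_assoc, zsq]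
  have hyyz : Y F * (Y F * Z F) = 0 := by rw [← mul_assoc, ysq, zero_mul]
  have hyxyz : Y F * (X F * (Y F * Z F)) = Y F * Z F := by
    rw [← mul_assoc, yx_eq, add_mul, mul_assoc, hyyz, mul_zero, zero_add, ← mul_assoc,
      Z_comm, mul_assoc, zsq]
  simp only [mul_add, mul_smul_comm, hyxz, hyyz, hyxyz, smul_zero, smul_add, add_smul,
    zero_smul, add_zero]
  abel

lemma Zmul_mem : ∀ r : uL F, inV F (Z F * r) := by
  apply uL_induction
  · intro r
    exact ⟨r, 0, 0, 0, by rw [← Algebra.commutes, ← Algebra.smul_def]; simp⟩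
  · exact ⟨0, 1, 0, 0, by rw [← rel_xz]; simp⟩
  · exact ⟨0, 0, 1, 0, by rw [← rel_yz]; simp⟩
  · exact ⟨1, 0, 0, 0, by rw [zsq]; simp⟩
  · intro a b ha hb
    rw [mul_add]; exact inV_add F ha hb
  · intro r1 r2 h1 h2
    obtain ⟨a, b, c, d, e1⟩ := h1
    rw [← mul_assoc, e1]
    have h2' := h2
    simp only [add_mul, smul_mul_assoc]
    rw [mul_assoc (X F), mul_assoc (Y F), mul_assoc (X F), mul_assoc (Y F)]
    exact inV_add F (inV_add F (inV_add F
      (inV_smul F a h2') (inV_smul F b (X_mulV F h2')))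
      (inV_smul F c (Y_mulV F h2')))
      (inV_smul F d (X_mulV F (Y_mulV F h2')))

end uLAux

namespace uLAux
variable (F : Type*) [Field F] [CharP F 2]

/-- commutator of 2x2 matrices has equal diagonal entries in char 2 -/
lemma comm_diag (A B : Matrix (Fin 2) (Fin 2) F) :
    (A * B - B * A) 0 0 = (A * B - B * A) 1 1 := by
  have h2 : (2 : F) = 0 := by exact_mod_cast CharP.cast_eq_zero F 2
  simp only [Matrix.sub_apply, Matrix.mul_apply, Fin.sum_univ_two]
  linear_combination (A 0 1 * B 1 0 - A 1 0 * B 0 1) * h2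

lemma comm_comm_entries (A B C D : Matrix (Fin 2) (Fin 2) F) :
    ((A * B - B * A) * (C * D - D * C) - (C * D - D * C) * (A * B - B * A)) 0 1 = 0 ∧
    ((A * B - B * A) * (C * D - D * C) - (C * D - D * C) * (A * B - B * A)) 1 0 = 0 ∧
    ((A * B - B * A) * (C * D - D * C) - (C * D - D * C) * (A * B - B * A)) 0 0 =
      ((A * B - B * A) * (C * D - D * C) - (C * D - D * C) * (A * B - B * A)) 1 1 := by
  have h2 : (2 : F) = 0 := by exact_mod_cast CharP.cast_eq_zero F 2
  have hA := comm_diag F A B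
  have hC := comm_diag F C D
  set X := A * B - B * A with hX
  set Y := C * D - D * C with hY
  have eX : ∀ i j, X i j = (A * B) i j - (B * A) i j := fun i j => rfl
  refine ⟨?_, ?_, ?_⟩ <;> simp only [Matrix.sub_apply, Matrix.mul_apply, Fin.sum_univ_two]
  · linear_combination Y 0 1 * hA - X 0 1 * hC
  · linear_combination X 1 0 * hC - Y 1 0 * hA
  · linear_combination (X 0 1 * Y 1 0 - X 1 0 * Y 0 1) * h2
end uLAux

namespace uLAux
variable (F : Type*) [Field F] [CharP F 2]

noncomputable def mf : Fin 3 → Matrix (Fin 2) (Fin 2) F :=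
  ![!![0,1;0,0], !![0,0;1,0], 1]

lemma hrel : ∀ ⦃u v : FreeAlgebra F (Fin 3)⦄, uRel F u v →
    FreeAlgebra.lift F (mf F) u = FreeAlgebra.lift F (mf F) v := by
  have h2 : (2 : F) = 0 := by exact_mod_cast CharP.cast_eq_zero F 2
  rintro u v h
  induction h <;>
    simp only [map_sub, map_mul, map_zero, FreeAlgebra.lift_ι_apply, mf] <;>
    · ext i j
      fin_cases i <;> fin_cases j <;>
        simp [Matrix.mul_apply, Fin.sum_univ_two, Matrix.one_apply] <;>
        first
          | linear_combination h2
          | linear_combination -h2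
          | linear_combination 2 * h2
          | linear_combination -2 * h2
end uLAux

namespace uLAux
variable (F : Type*) [Field F] [CharP F 2]

noncomputable def φ : uL F →ₐ[F] Matrix (Fin 2) (Fin 2) F :=
  RingQuot.liftAlgHom F ⟨FreeAlgebra.lift F (mf F), hrel F⟩

lemma φ_X : φ F (X F) = !![0,1;0,0] := by
  rw [X, φ]; erw [RingQuot.liftAlgHom_mkAlgHom_apply, FreeAlgebra.lift_ι_apply]; rfl

lemma φ_Y : φ F (Y F) = !![0,0;1,0] := by
  rw [Y, φ]; erw [RingQuot.liftAlgHom_mkAlgHom_apply, FreeAlgebra.lift_ι_apply]; rfl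

lemma φ_Z : φ F (Z F) = 1 := by
  rw [Z, φ]; erw [RingQuot.liftAlgHom_mkAlgHom_apply, FreeAlgebra.lift_ι_apply]; rfl
end uLAux

namespace uLAux
variable (F : Type*) [Field F] [CharP F 2]

lemma ZmulZmul (p q : uL F) : (Z F * p) * (Z F * q) = Z F * (Z F * (p * q)) := by
  rw [mul_assoc, ← mul_assoc p, ← Z_comm, mul_assoc]

lemma e12e21 : (!![0,1;0,0] : Matrix (Fin 2) (Fin 2) F) * !![0,0;1,0] = !![1,0;0,0] := by
  ext i j
  fin_cases i <;> fin_cases j <;> simp [Matrix.mul_apply, Fin.sum_univ_two]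

end uLAux

/-- for `F` of characteristic 2, `u(L)` is Lie center-by-metabelian but
not Lie metabelian: `[[[a,b],[c,d]],e] = 0` always, yet some `[[a,b],[c,d]] ≠ 0`. -/
theorem uL_center_by_metabelian_not_metabelian (F : Type*) [Field F] [CharP F 2] :
    (∀ a b c d e : uL F,
      ((a * b - b * a) * (c * d - d * c) - (c * d - d * c) * (a * b - b * a)) * e -
        e * ((a * b - b * a) * (c * d - d * c) - (c * d - d * c) * (a * b - b * a)) = 0) ∧
    (∃ a b c d : uL F,
      (a * b - b * a) * (c * d - d * c) - (c * d - d * c) * (a * b - b * a) ≠ 0) := by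
  open uLAux in
  constructor
  · intro a b c d e
    obtain ⟨p, hp⟩ := comm_mem F a b
    obtain ⟨q, hq⟩ := comm_mem F c d
    obtain ⟨r, hr⟩ := comm_mem F p q
    have hW : (a * b - b * a) * (c * d - d * c) - (c * d - d * c) * (a * b - b * a)
        = Z F * (Z F * (Z F * r)) := by
      rw [hp, hq, ZmulZmul, ZmulZmul, ← mul_sub, ← mul_sub, hr]
    obtain ⟨α, β, γ, δ, hV⟩ := Zmul_mem F (Z F * (Z F * r))
    rw [← hW] at hV
    -- entry analysis via φ
    have hents := comm_comm_entries F (φ F a) (φ F b) (φ F c) (φ F d)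
    have hφW : φ F ((a * b - b * a) * (c * d - d * c) - (c * d - d * c) * (a * b - b * a))
        = (φ F a * φ F b - φ F b * φ F a) * (φ F c * φ F d - φ F d * φ F c) -
          (φ F c * φ F d - φ F d * φ F c) * (φ F a * φ F b - φ F b * φ F a) := by
      simp only [map_sub, map_mul]
    have hφV : φ F ((a * b - b * a) * (c * d - d * c) - (c * d - d * c) * (a * b - b * a))
        = α • (1 : Matrix (Fin 2) (Fin 2) F) + β • !![0,1;0,0] + γ • !![0,0;1,0]
          + δ • !![1,0;0,0] := by
      rw [hV]
      simp only [map_add, map_smul, map_mul, φ_X, φ_Y, φ_Z, mul_one, e12e21]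
    rw [hφW] at hφV
    have hβ : β = 0 := by
      have h01 := hents.1
      rw [hφV] at h01
      simpa [Matrix.add_apply, Matrix.smul_apply, Matrix.one_apply] using h01
    have hγ : γ = 0 := by
      have h10 := hents.2.1
      rw [hφV] at h10
      simpa [Matrix.add_apply, Matrix.smul_apply, Matrix.one_apply] using h10
    have hδ : δ = 0 := by
      have h00 := hents.2.2
      rw [hφV] at h00
      simpa [Matrix.add_apply, Matrix.smul_apply, Matrix.one_apply] using h00
    rw [hV, hβ, hγ, hδ, zero_smul, zero_smul, zero_smul, add_zero, add_zero, add_zero,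
      smul_mul_assoc, mul_smul_comm, Z_comm, sub_self]
  · refine ⟨X F, X F * Y F, Y F, X F * Y F, fun h => ?_⟩
    have h0 := congrArg (φ F) h
    simp only [map_sub, map_mul, map_zero, φ_X, φ_Y] at h0
    have h1 := congrFun (congrFun h0 0) 0
    simp [Matrix.mul_apply, Fin.sum_univ_two] at h1
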